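/- arXiv:1905.05930 — 3 statements merged into one kernel-verified Lean document; each statement's English description precedes it below -/
import Mathlib

section
/- The 27 three-qutrit product states |0⟩|η_s⟩|ξ_t⟩, |η_s⟩|2⟩|ξ_t⟩, |2⟩|ξ_s⟩|η_t⟩, |η_s⟩|ξ_t⟩|0⟩, |ξ_s⟩|0⟩|η_t⟩, |ξ_s⟩|η_t⟩|2⟩ for s,t ∈ {+,−}, together with |k⟩|k⟩|k⟩ for k ∈ {0,1,2}, form an orthonormal basis of ℂ³ ⊗ ℂ³ ⊗ ℂ³. -/
noncomputable section

abbrev V3 : Type := EuclideanSpace ℂ (Fin 3)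
abbrev V333 : Type := EuclideanSpace ℂ (Fin 3 × Fin 3 × Fin 3)

def e3 (i : Fin 3) : V3 := EuclideanSpace.single i 1
def s2 : ℂ := Real.sqrt 2
def etaP : V3 := s2⁻¹ • (e3 0 + e3 1)
def etaM : V3 := s2⁻¹ • (e3 0 - e3 1)
def xiP : V3 := s2⁻¹ • (e3 1 + e3 2)
def xiM : V3 := s2⁻¹ • (e3 1 - e3 2)

/-- The tensor product `a ⊗ b ⊗ c ∈ (ℂ³)^⊗3`. -/
def tp3 (a b c : V3) : V333 := WithLp.toLp 2 (fun p : Fin 3 × Fin 3 × Fin 3 => a p.1 * b p.2.1 * c p.2.2)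

/-- The basis `𝔹_II(3,3)` of the paper. -/
def BII33 : Fin 27 → V333 :=
  ![tp3 (e3 0) etaP xiP, tp3 (e3 0) etaP xiM, tp3 (e3 0) etaM xiP, tp3 (e3 0) etaM xiM,
    tp3 etaP (e3 2) xiP, tp3 etaP (e3 2) xiM, tp3 etaM (e3 2) xiP, tp3 etaM (e3 2) xiM,
    tp3 (e3 2) xiP etaP, tp3 (e3 2) xiP etaM, tp3 (e3 2) xiM etaP, tp3 (e3 2) xiM etaM,
    tp3 etaP xiP (e3 0), tp3 etaP xiM (e3 0), tp3 etaM xiP (e3 0), tp3 etaM xiM (e3 0),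
    tp3 xiP (e3 0) etaP, tp3 xiP (e3 0) etaM, tp3 xiM (e3 0) etaP, tp3 xiM (e3 0) etaM,
    tp3 xiP etaP (e3 2), tp3 xiP etaM (e3 2), tp3 xiM etaP (e3 2), tp3 xiM etaM (e3 2),
    tp3 (e3 0) (e3 0) (e3 0), tp3 (e3 1) (e3 1) (e3 1), tp3 (e3 2) (e3 2) (e3 2)]

@[simp] lemma star_s2 : star s2 = s2 := by
  simp [s2, Complex.star_def, Complex.conj_ofReal]

@[simp] lemma s2inv_mul : s2⁻¹ * s2⁻¹ = (2⁻¹ : ℂ) := by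
  rw [← mul_inv]
  norm_num [s2, ← Complex.ofReal_mul, Real.mul_self_sqrt]

lemma inner3 (x y : V3) :
    (inner ℂ x y : ℂ) = star (x 0) * y 0 + star (x 1) * y 1 + star (x 2) * y 2 := by
  simp [PiLp.inner_apply, Fin.sum_univ_three, RCLike.inner_apply, mul_comm]

lemma etaP_apply (i : Fin 3) : etaP i = ![s2⁻¹, s2⁻¹, 0] i := by
  fin_cases i <;> simp [etaP, e3, EuclideanSpace.single_apply]
lemma etaM_apply (i : Fin 3) : etaM i = ![s2⁻¹, -s2⁻¹, 0] i := by
  fin_cases i <;> simp [etaM, e3, EuclideanSpace.single_apply]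
lemma xiP_apply (i : Fin 3) : xiP i = ![0, s2⁻¹, s2⁻¹] i := by
  fin_cases i <;> simp [xiP, e3, EuclideanSpace.single_apply]
lemma xiM_apply (i : Fin 3) : xiM i = ![0, s2⁻¹, -s2⁻¹] i := by
  fin_cases i <;> simp [xiM, e3, EuclideanSpace.single_apply]
lemma e3_apply (j i : Fin 3) : e3 j i = ![(![1,0,0] : Fin 3 → ℂ), ![0,1,0], ![0,0,1]] j i := by
  fin_cases j <;> fin_cases i <;>
    (simp [e3, EuclideanSpace.single_apply, Fin.ext_iff]; try rfl)

@[simp] lemma conj_s2 : (starRingEnd ℂ) s2 = s2 := star_s2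

@[simp] lemma conj_s2inv : (starRingEnd ℂ) s2⁻¹ = s2⁻¹ := by
  rw [map_inv₀]; exact congrArg _ star_s2

@[simp] lemma tbl0 : (inner ℂ ((e3 0):V3) (e3 0) : ℂ) = 1 := by
  rw [inner3]; simp [Fin.sum_univ_three, etaP_apply, etaM_apply, xiP_apply, xiM_apply, e3_apply]; try norm_num
@[simp] lemma tbl1 : (inner ℂ ((e3 0):V3) (e3 1) : ℂ) = 0 := by
  simp [inner3, Fin.sum_univ_three, etaP_apply, etaM_apply, xiP_apply, xiM_apply, e3_apply]; try norm_num
@[simp] lemma tbl2 : (inner ℂ ((e3 0):V3) (e3 2) : ℂ) = 0 := by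
  simp [inner3, Fin.sum_univ_three, etaP_apply, etaM_apply, xiP_apply, xiM_apply, e3_apply]; try norm_num
@[simp] lemma tbl3 : (inner ℂ ((e3 0):V3) etaP : ℂ) = s2⁻¹ := by
  simp [inner3, Fin.sum_univ_three, etaP_apply, etaM_apply, xiP_apply, xiM_apply, e3_apply]; try norm_num
@[simp] lemma tbl4 : (inner ℂ ((e3 0):V3) etaM : ℂ) = s2⁻¹ := by
  simp [inner3, Fin.sum_univ_three, etaP_apply, etaM_apply, xiP_apply, xiM_apply, e3_apply]; try norm_num
@[simp] lemma tbl5 : (inner ℂ ((e3 0):V3) xiP : ℂ) = 0 := by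
  simp [inner3, Fin.sum_univ_three, etaP_apply, etaM_apply, xiP_apply, xiM_apply, e3_apply]; try norm_num
@[simp] lemma tbl6 : (inner ℂ ((e3 0):V3) xiM : ℂ) = 0 := by
  simp [inner3, Fin.sum_univ_three, etaP_apply, etaM_apply, xiP_apply, xiM_apply, e3_apply]; try norm_num
@[simp] lemma tbl7 : (inner ℂ ((e3 1):V3) (e3 0) : ℂ) = 0 := by
  simp [inner3, Fin.sum_univ_three, etaP_apply, etaM_apply, xiP_apply, xiM_apply, e3_apply]; try norm_num
@[simp] lemma tbl8 : (inner ℂ ((e3 1):V3) (e3 1) : ℂ) = 1 := by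
  rw [inner3]; simp [Fin.sum_univ_three, etaP_apply, etaM_apply, xiP_apply, xiM_apply, e3_apply]; try norm_num
@[simp] lemma tbl9 : (inner ℂ ((e3 1):V3) (e3 2) : ℂ) = 0 := by
  simp [inner3, Fin.sum_univ_three, etaP_apply, etaM_apply, xiP_apply, xiM_apply, e3_apply]; try norm_num
@[simp] lemma tbl10 : (inner ℂ ((e3 1):V3) etaP : ℂ) = s2⁻¹ := by
  simp [inner3, Fin.sum_univ_three, etaP_apply, etaM_apply, xiP_apply, xiM_apply, e3_apply]; try norm_num
@[simp] lemma tbl11 : (inner ℂ ((e3 1):V3) etaM : ℂ) = -s2⁻¹ := by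
  simp [inner3, Fin.sum_univ_three, etaP_apply, etaM_apply, xiP_apply, xiM_apply, e3_apply]; try norm_num
@[simp] lemma tbl12 : (inner ℂ ((e3 1):V3) xiP : ℂ) = s2⁻¹ := by
  simp [inner3, Fin.sum_univ_three, etaP_apply, etaM_apply, xiP_apply, xiM_apply, e3_apply]; try norm_num
@[simp] lemma tbl13 : (inner ℂ ((e3 1):V3) xiM : ℂ) = s2⁻¹ := by
  simp [inner3, Fin.sum_univ_three, etaP_apply, etaM_apply, xiP_apply, xiM_apply, e3_apply]; try norm_num
@[simp] lemma tbl14 : (inner ℂ ((e3 2):V3) (e3 0) : ℂ) = 0 := by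
  simp [inner3, Fin.sum_univ_three, etaP_apply, etaM_apply, xiP_apply, xiM_apply, e3_apply]; try norm_num
@[simp] lemma tbl15 : (inner ℂ ((e3 2):V3) (e3 1) : ℂ) = 0 := by
  simp [inner3, Fin.sum_univ_three, etaP_apply, etaM_apply, xiP_apply, xiM_apply, e3_apply]; try norm_num
@[simp] lemma tbl16 : (inner ℂ ((e3 2):V3) (e3 2) : ℂ) = 1 := by
  rw [inner3]; simp [Fin.sum_univ_three, etaP_apply, etaM_apply, xiP_apply, xiM_apply, e3_apply]; try norm_num
@[simp] lemma tbl17 : (inner ℂ ((e3 2):V3) etaP : ℂ) = 0 := by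
  simp [inner3, Fin.sum_univ_three, etaP_apply, etaM_apply, xiP_apply, xiM_apply, e3_apply]; try norm_num
@[simp] lemma tbl18 : (inner ℂ ((e3 2):V3) etaM : ℂ) = 0 := by
  simp [inner3, Fin.sum_univ_three, etaP_apply, etaM_apply, xiP_apply, xiM_apply, e3_apply]; try norm_num
@[simp] lemma tbl19 : (inner ℂ ((e3 2):V3) xiP : ℂ) = s2⁻¹ := by
  simp [inner3, Fin.sum_univ_three, etaP_apply, etaM_apply, xiP_apply, xiM_apply, e3_apply]; try norm_num
@[simp] lemma tbl20 : (inner ℂ ((e3 2):V3) xiM : ℂ) = -s2⁻¹ := by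
  simp [inner3, Fin.sum_univ_three, etaP_apply, etaM_apply, xiP_apply, xiM_apply, e3_apply]; try norm_num
@[simp] lemma tbl21 : (inner ℂ (etaP:V3) (e3 0) : ℂ) = s2⁻¹ := by
  simp [inner3, Fin.sum_univ_three, etaP_apply, etaM_apply, xiP_apply, xiM_apply, e3_apply]; try norm_num
@[simp] lemma tbl22 : (inner ℂ (etaP:V3) (e3 1) : ℂ) = s2⁻¹ := by
  simp [inner3, Fin.sum_univ_three, etaP_apply, etaM_apply, xiP_apply, xiM_apply, e3_apply]; try norm_num
@[simp] lemma tbl23 : (inner ℂ (etaP:V3) (e3 2) : ℂ) = 0 := by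
  simp [inner3, Fin.sum_univ_three, etaP_apply, etaM_apply, xiP_apply, xiM_apply, e3_apply]; try norm_num
@[simp] lemma tbl24 : (inner ℂ (etaP:V3) etaP : ℂ) = 1 := by
  rw [inner3]; simp [Fin.sum_univ_three, etaP_apply, etaM_apply, xiP_apply, xiM_apply, e3_apply]; try norm_num
@[simp] lemma tbl25 : (inner ℂ (etaP:V3) etaM : ℂ) = 0 := by
  simp [inner3, Fin.sum_univ_three, etaP_apply, etaM_apply, xiP_apply, xiM_apply, e3_apply]; try norm_num
@[simp] lemma tbl26 : (inner ℂ (etaP:V3) xiP : ℂ) = (2⁻¹:ℂ) := by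
  simp [inner3, Fin.sum_univ_three, etaP_apply, etaM_apply, xiP_apply, xiM_apply, e3_apply]; try norm_num
@[simp] lemma tbl27 : (inner ℂ (etaP:V3) xiM : ℂ) = (2⁻¹:ℂ) := by
  simp [inner3, Fin.sum_univ_three, etaP_apply, etaM_apply, xiP_apply, xiM_apply, e3_apply]; try norm_num
@[simp] lemma tbl28 : (inner ℂ (etaM:V3) (e3 0) : ℂ) = s2⁻¹ := by
  simp [inner3, Fin.sum_univ_three, etaP_apply, etaM_apply, xiP_apply, xiM_apply, e3_apply]; try norm_num
@[simp] lemma tbl29 : (inner ℂ (etaM:V3) (e3 1) : ℂ) = -s2⁻¹ := by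
  simp [inner3, Fin.sum_univ_three, etaP_apply, etaM_apply, xiP_apply, xiM_apply, e3_apply]; try norm_num
@[simp] lemma tbl30 : (inner ℂ (etaM:V3) (e3 2) : ℂ) = 0 := by
  simp [inner3, Fin.sum_univ_three, etaP_apply, etaM_apply, xiP_apply, xiM_apply, e3_apply]; try norm_num
@[simp] lemma tbl31 : (inner ℂ (etaM:V3) etaP : ℂ) = 0 := by
  simp [inner3, Fin.sum_univ_three, etaP_apply, etaM_apply, xiP_apply, xiM_apply, e3_apply]; try norm_num
@[simp] lemma tbl32 : (inner ℂ (etaM:V3) etaM : ℂ) = 1 := by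
  rw [inner3]; simp [Fin.sum_univ_three, etaP_apply, etaM_apply, xiP_apply, xiM_apply, e3_apply]; try norm_num
@[simp] lemma tbl33 : (inner ℂ (etaM:V3) xiP : ℂ) = (-(2⁻¹:ℂ)) := by
  simp [inner3, Fin.sum_univ_three, etaP_apply, etaM_apply, xiP_apply, xiM_apply, e3_apply]; try norm_num
@[simp] lemma tbl34 : (inner ℂ (etaM:V3) xiM : ℂ) = (-(2⁻¹:ℂ)) := by
  simp [inner3, Fin.sum_univ_three, etaP_apply, etaM_apply, xiP_apply, xiM_apply, e3_apply]; try norm_num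
@[simp] lemma tbl35 : (inner ℂ (xiP:V3) (e3 0) : ℂ) = 0 := by
  simp [inner3, Fin.sum_univ_three, etaP_apply, etaM_apply, xiP_apply, xiM_apply, e3_apply]; try norm_num
@[simp] lemma tbl36 : (inner ℂ (xiP:V3) (e3 1) : ℂ) = s2⁻¹ := by
  simp [inner3, Fin.sum_univ_three, etaP_apply, etaM_apply, xiP_apply, xiM_apply, e3_apply]; try norm_num
@[simp] lemma tbl37 : (inner ℂ (xiP:V3) (e3 2) : ℂ) = s2⁻¹ := by
  simp [inner3, Fin.sum_univ_three, etaP_apply, etaM_apply, xiP_apply, xiM_apply, e3_apply]; try norm_num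
@[simp] lemma tbl38 : (inner ℂ (xiP:V3) etaP : ℂ) = (2⁻¹:ℂ) := by
  simp [inner3, Fin.sum_univ_three, etaP_apply, etaM_apply, xiP_apply, xiM_apply, e3_apply]; try norm_num
@[simp] lemma tbl39 : (inner ℂ (xiP:V3) etaM : ℂ) = (-(2⁻¹:ℂ)) := by
  simp [inner3, Fin.sum_univ_three, etaP_apply, etaM_apply, xiP_apply, xiM_apply, e3_apply]; try norm_num
@[simp] lemma tbl40 : (inner ℂ (xiP:V3) xiP : ℂ) = 1 := by
  rw [inner3]; simp [Fin.sum_univ_three, etaP_apply, etaM_apply, xiP_apply, xiM_apply, e3_apply]; try norm_num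
@[simp] lemma tbl41 : (inner ℂ (xiP:V3) xiM : ℂ) = 0 := by
  simp [inner3, Fin.sum_univ_three, etaP_apply, etaM_apply, xiP_apply, xiM_apply, e3_apply]; try norm_num
@[simp] lemma tbl42 : (inner ℂ (xiM:V3) (e3 0) : ℂ) = 0 := by
  simp [inner3, Fin.sum_univ_three, etaP_apply, etaM_apply, xiP_apply, xiM_apply, e3_apply]; try norm_num
@[simp] lemma tbl43 : (inner ℂ (xiM:V3) (e3 1) : ℂ) = s2⁻¹ := by
  simp [inner3, Fin.sum_univ_three, etaP_apply, etaM_apply, xiP_apply, xiM_apply, e3_apply]; try norm_num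
@[simp] lemma tbl44 : (inner ℂ (xiM:V3) (e3 2) : ℂ) = -s2⁻¹ := by
  simp [inner3, Fin.sum_univ_three, etaP_apply, etaM_apply, xiP_apply, xiM_apply, e3_apply]; try norm_num
@[simp] lemma tbl45 : (inner ℂ (xiM:V3) etaP : ℂ) = (2⁻¹:ℂ) := by
  simp [inner3, Fin.sum_univ_three, etaP_apply, etaM_apply, xiP_apply, xiM_apply, e3_apply]; try norm_num
@[simp] lemma tbl46 : (inner ℂ (xiM:V3) etaM : ℂ) = (-(2⁻¹:ℂ)) := by
  simp [inner3, Fin.sum_univ_three, etaP_apply, etaM_apply, xiP_apply, xiM_apply, e3_apply]; try norm_num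
@[simp] lemma tbl47 : (inner ℂ (xiM:V3) xiP : ℂ) = 0 := by
  simp [inner3, Fin.sum_univ_three, etaP_apply, etaM_apply, xiP_apply, xiM_apply, e3_apply]; try norm_num
@[simp] lemma tbl48 : (inner ℂ (xiM:V3) xiM : ℂ) = 1 := by
  rw [inner3]; simp [Fin.sum_univ_three, etaP_apply, etaM_apply, xiP_apply, xiM_apply, e3_apply]; try norm_num

lemma key {α β : Type} [Fintype α] [Fintype β] (f f' : α → ℂ) (g g' : β → ℂ) :
    ∑ p : α × β, star (f p.1 * g p.2) * (f' p.1 * g' p.2)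
      = (∑ x, star (f x) * f' x) * (∑ y, star (g y) * g' y) := by
  rw [Finset.sum_mul_sum, Fintype.sum_prod_type]
  apply Finset.sum_congr rfl; intro x _
  apply Finset.sum_congr rfl; intro y _
  simp only [star_mul']
  ring

lemma inner_tp3 (a b c a' b' c' : V3) :
    (inner ℂ (tp3 a b c) (tp3 a' b' c') : ℂ)
      = (inner ℂ a a' : ℂ) * (inner ℂ b b' : ℂ) * (inner ℂ c c' : ℂ) := by
  simp only [tp3, PiLp.inner_apply, RCLike.inner_apply, mul_comm _ ((starRingEnd ℂ) _)]
  simp only [← Complex.star_def, mul_assoc]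
  rw [key (β := Fin 3 × Fin 3) a a' (fun q => b q.1 * c q.2) (fun q => b' q.1 * c' q.2), key b b' c c']



lemma hB0 : BII33 ⟨0, by omega⟩ = tp3 (e3 0) etaP xiP := rfl
lemma hB1 : BII33 ⟨1, by omega⟩ = tp3 (e3 0) etaP xiM := rfl
lemma hB2 : BII33 ⟨2, by omega⟩ = tp3 (e3 0) etaM xiP := rfl
lemma hB3 : BII33 ⟨3, by omega⟩ = tp3 (e3 0) etaM xiM := rfl
lemma hB4 : BII33 ⟨4, by omega⟩ = tp3 etaP (e3 2) xiP := rfl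
lemma hB5 : BII33 ⟨5, by omega⟩ = tp3 etaP (e3 2) xiM := rfl
lemma hB6 : BII33 ⟨6, by omega⟩ = tp3 etaM (e3 2) xiP := rfl
lemma hB7 : BII33 ⟨7, by omega⟩ = tp3 etaM (e3 2) xiM := rfl
lemma hB8 : BII33 ⟨8, by omega⟩ = tp3 (e3 2) xiP etaP := rfl
lemma hB9 : BII33 ⟨9, by omega⟩ = tp3 (e3 2) xiP etaM := rfl
lemma hB10 : BII33 ⟨10, by omega⟩ = tp3 (e3 2) xiM etaP := rfl
lemma hB11 : BII33 ⟨11, by omega⟩ = tp3 (e3 2) xiM etaM := rfl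
lemma hB12 : BII33 ⟨12, by omega⟩ = tp3 etaP xiP (e3 0) := rfl
lemma hB13 : BII33 ⟨13, by omega⟩ = tp3 etaP xiM (e3 0) := rfl
lemma hB14 : BII33 ⟨14, by omega⟩ = tp3 etaM xiP (e3 0) := rfl
lemma hB15 : BII33 ⟨15, by omega⟩ = tp3 etaM xiM (e3 0) := rfl
lemma hB16 : BII33 ⟨16, by omega⟩ = tp3 xiP (e3 0) etaP := rfl
lemma hB17 : BII33 ⟨17, by omega⟩ = tp3 xiP (e3 0) etaM := rfl
lemma hB18 : BII33 ⟨18, by omega⟩ = tp3 xiM (e3 0) etaP := rfl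
lemma hB19 : BII33 ⟨19, by omega⟩ = tp3 xiM (e3 0) etaM := rfl
lemma hB20 : BII33 ⟨20, by omega⟩ = tp3 xiP etaP (e3 2) := rfl
lemma hB21 : BII33 ⟨21, by omega⟩ = tp3 xiP etaM (e3 2) := rfl
lemma hB22 : BII33 ⟨22, by omega⟩ = tp3 xiM etaP (e3 2) := rfl
lemma hB23 : BII33 ⟨23, by omega⟩ = tp3 xiM etaM (e3 2) := rfl
lemma hB24 : BII33 ⟨24, by omega⟩ = tp3 (e3 0) (e3 0) (e3 0) := rfl
lemma hB25 : BII33 ⟨25, by omega⟩ = tp3 (e3 1) (e3 1) (e3 1) := rfl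
lemma hB26 : BII33 ⟨26, by omega⟩ = tp3 (e3 2) (e3 2) (e3 2) := rfl

set_option maxHeartbeats 2000000 in
/-- the 27 product states of `𝔹_II(3,3)` form an orthonormal basis of
`ℂ³ ⊗ ℂ³ ⊗ ℂ³`. -/
theorem BII33_orthonormal_basis :
    Orthonormal ℂ BII33 ∧ Submodule.span ℂ (Set.range BII33) = ⊤ := by
  have horth : Orthonormal ℂ BII33 := by
    rw [orthonormal_iff_ite]
    intro i j
    fin_cases i <;> fin_cases j <;>
      simp only [hB0, hB1, hB2, hB3, hB4, hB5, hB6, hB7, hB8, hB9, hB10, hB11, hB12, hB13, hB14, hB15, hB16, hB17, hB18, hB19, hB20, hB21, hB22, hB23, hB24, hB25, hB26, inner_tp3, tbl0, tbl1, tbl2, tbl3, tbl4, tbl5, tbl6, tbl7, tbl8, tbl9, tbl10, tbl11, tbl12, tbl13, tbl14, tbl15, tbl16, tbl17, tbl18, tbl19, tbl20, tbl21, tbl22, tbl23, tbl24, tbl25, tbl26, tbl27, tbl28, tbl29, tbl30, tbl31, tbl32, tbl33, tbl34, tbl35, tbl36, tbl37, tbl38, tbl39, tbl40, tbl41, tbl42,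 tbl43, tbl44, tbl45, tbl46, tbl47, tbl48, mul_zero, zero_mul, mul_one, one_mul,
        neg_mul, mul_neg, neg_zero, neg_neg] <;>
      norm_num [Fin.ext_iff]
  refine ⟨horth, horth.linearIndependent.span_eq_top_of_card_eq_finrank ?_⟩
  simp [finrank_euclideanSpace]
end
end

section
/- If a positive semidefinite operator E on ℂ³ satisfies ⟨ψ_i| (E ⊗ I₃ ⊗ I₃) |ψ_j⟩ = 0 for all i ≠ j, where {|ψ_j⟩} are the 27 states of the basis 𝔹_II(3,3) and E acts on the first tensor factor, then E is proportional to the identity on ℂ³. -/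
noncomputable section
open Kronecker ComplexOrder

set_option maxHeartbeats 1000000 in
lemma key_BII (E : Matrix (Fin 3) (Fin 3) ℂ) (a b c a' b' c' : V3) :
    (inner ℂ (tp3 a b c) (Matrix.toEuclideanLin
      (E ⊗ₖ (1 : Matrix (Fin 3 × Fin 3) (Fin 3 × Fin 3) ℂ)) (tp3 a' b' c')) : ℂ)
    = (∑ p, ∑ q, (starRingEnd ℂ) (a p) * E p q * a' q) *
      ((inner ℂ b b' : ℂ) * (inner ℂ c c' : ℂ)) := by
  simp only [PiLp.inner_apply, Matrix.toEuclideanLin_apply, Matrix.kroneckerMap_apply,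
    Matrix.mulVec, dotProduct, Matrix.one_apply, Fintype.sum_prod_type,
    PiLp.toLp_apply, WithLp.ofLp_toLp, RCLike.inner_apply, map_mul,
    Prod.mk.injEq, Fin.sum_univ_three]
  norm_num [Fin.ext_iff, tp3]
  ring

lemma s2_ne : s2 ≠ 0 := by
  simp only [s2, ne_eq, Complex.ofReal_eq_zero]
  positivity

set_option maxHeartbeats 2000000 in
/-- a positive semidefinite operator `E` on `ℂ³` acting on the first factor
that preserves orthogonality of all pairs of states of `𝔹_II(3,3)` is proportional to the
identity. -/
theorem BII33_OPM_trivial (E : Matrix (Fin 3) (Fin 3) ℂ) (hE : E.PosSemidef)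
    (h : ∀ i j : Fin 27, i ≠ j →
      (inner ℂ (BII33 i)
        (Matrix.toEuclideanLin
          (E ⊗ₖ (1 : Matrix (Fin 3 × Fin 3) (Fin 3 × Fin 3) ℂ)) (BII33 j)) : ℂ) = 0) :
    ∃ c : ℂ, E = c • (1 : Matrix (Fin 3) (Fin 3) ℂ) := by

  have hs := s2_ne
  have h1 := h 24 16 (by decide)
  have h2 := h 24 18 (by decide)
  have h3 := h 16 24 (by decide)
  have h4 := h 18 24 (by decide)
  have h5 := h 4 6 (by decide)
  have h6 := h 6 4 (by decide)
  have h7 := h 16 18 (by decide)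
  have h8 := h 18 16 (by decide)
  have h9 := h 26 4 (by decide)
  simp only [show BII33 24 = tp3 (e3 0) (e3 0) (e3 0) from rfl,
    show BII33 16 = tp3 xiP (e3 0) etaP from rfl,
    show BII33 18 = tp3 xiM (e3 0) etaP from rfl,
    show BII33 4 = tp3 etaP (e3 2) xiP from rfl,
    show BII33 6 = tp3 etaM (e3 2) xiP from rfl,
    show BII33 26 = tp3 (e3 2) (e3 2) (e3 2) from rfl]
    at h1 h2 h3 h4 h5 h6 h7 h8 h9
  rw [key_BII] at h1 h2 h3 h4 h5 h6 h7 h8 h9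
  simp only [PiLp.inner_apply, RCLike.inner_apply, Fin.sum_univ_three,
    e3, etaP, etaM, xiP, xiM, EuclideanSpace.single_apply, PiLp.smul_apply,
    PiLp.add_apply, PiLp.sub_apply, smul_eq_mul, map_mul, map_inv₀, map_add, map_sub,
    map_one, map_zero, Complex.conj_ofReal] at h1 h2 h3 h4 h5 h6 h7 h8 h9
  norm_num [Fin.ext_iff, s2] at h1 h2 h3 h4 h5 h6 h7 h8 h9
  have hs' : ((Real.sqrt 2 : ℝ) : ℂ) ≠ 0 := hs
  have hsq : ((Real.sqrt 2 : ℝ) : ℂ) * ((Real.sqrt 2 : ℝ) : ℂ) = 2 := by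
    rw [← Complex.ofReal_mul, Real.mul_self_sqrt (by norm_num)]; norm_num
  field_simp [hs'] at h1 h2 h3 h4 h5 h6 h7 h8 h9
  simp only [mul_zero] at h1 h2 h3 h4 h5 h6 h7 h8 h9
  refine ⟨E 0 0, ?_⟩
  ext i j
  fin_cases i <;> fin_cases j <;>
    norm_num [Matrix.one_apply, Fin.ext_iff]
  · show E 0 1 = 0
    linear_combination (1/2 : ℂ) * h1 + (1/2 : ℂ) * h2
  · show E 0 2 = 0
    linear_combination (1/2 : ℂ) * h1 - (1/2 : ℂ) * h2
  · show E 1 0 = 0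
    linear_combination (1/2 : ℂ) * h3 + (1/2 : ℂ) * h4
  · show E 1 1 = E 0 0
    linear_combination (-1/2 : ℂ) * h5 - (1/2 : ℂ) * h6
  · show E 1 2 = 0
    linear_combination (1/2 : ℂ) * h8 - (1/2 : ℂ) * h7 + h9 - (1/2 : ℂ) * h3 + (1/2 : ℂ) * h4
  · show E 2 0 = 0
    linear_combination (1/2 : ℂ) * h3 - (1/2 : ℂ) * h4
  · show E 2 1 = 0
    linear_combination h9 - (1/2 : ℂ) * h3 + (1/2 : ℂ) * h4
  · show E 2 2 = E 0 0
    linear_combination (-1/2 : ℂ) * h5 - (1/2 : ℂ) * h6 - (1/2 : ℂ) * h7 - (1/2 : ℂ) * h8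
end
end

section
/- For any positive semidefinite operator E on ℂ² that is not proportional to the identity, there exist two states among the eight-state completed Shift basis of (ℂ²)^⊗3 whose images under E ⊗ I ⊗ I (E acting on the first qubit) are not orthogonal. -/
noncomputable section
open Kronecker ComplexOrder

abbrev Q : Type := EuclideanSpace ℂ (Fin 2)
abbrev Q3 : Type := EuclideanSpace ℂ (Fin 2 × Fin 2 × Fin 2)

def e2 (i : Fin 2) : Q := EuclideanSpace.single i 1
def plus : Q := s2⁻¹ • (e2 0 + e2 1)
def minus : Q := s2⁻¹ • (e2 0 - e2 1)

def tq3 (a b c : Q) : Q3 :=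
  WithLp.toLp 2 (fun p : Fin 2 × Fin 2 × Fin 2 => a p.1 * b p.2.1 * c p.2.2)

/-- The completed Shift product basis of `(ℂ²)^⊗3`. -/
def shiftBasis : Fin 8 → Q3 :=
  ![tq3 (e2 0) (e2 1) plus, tq3 (e2 0) (e2 1) minus,
    tq3 (e2 1) plus (e2 0), tq3 (e2 1) minus (e2 0),
    tq3 plus (e2 0) (e2 1), tq3 minus (e2 0) (e2 1),
    tq3 (e2 0) (e2 0) (e2 0), tq3 (e2 1) (e2 1) (e2 1)]

lemma shift_comp (E : Matrix (Fin 2) (Fin 2) ℂ) (a b c : Q) (p : Fin 2 × Fin 2 × Fin 2) :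
    Matrix.toEuclideanLin (E ⊗ₖ (1 : Matrix (Fin 2 × Fin 2) (Fin 2 × Fin 2) ℂ)) (tq3 a b c) p
      = E.mulVec a p.1 * b p.2.1 * c p.2.2 := by
  obtain ⟨i, k, l⟩ := p
  show (E ⊗ₖ (1 : Matrix (Fin 2 × Fin 2) (Fin 2 × Fin 2) ℂ)).mulVec (tq3 a b c).ofLp (i,(k,l)) = _
  simp only [Matrix.mulVec, dotProduct, Fintype.sum_prod_type, Matrix.kroneckerMap_apply,
    Matrix.one_apply, tq3, Matrix.mulVec, dotProduct]
  simp [Prod.ext_iff, ite_and, mul_ite, Finset.mul_sum, Finset.sum_mul]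
  ring_nf

lemma shift_key (E : Matrix (Fin 2) (Fin 2) ℂ) (a b c a' b' c' : Q) :
    (inner ℂ (Matrix.toEuclideanLin (E ⊗ₖ (1 : Matrix (Fin 2 × Fin 2) (Fin 2 × Fin 2) ℂ)) (tq3 a b c))
      (Matrix.toEuclideanLin (E ⊗ₖ (1 : Matrix (Fin 2 × Fin 2) (Fin 2 × Fin 2) ℂ)) (tq3 a' b' c')) : ℂ)
    = (∑ i, star (E.mulVec a i) * E.mulVec a' i) * (∑ k, star (b k) * b' k)
        * (∑ l, star (c l) * c' l) := by
  rw [show (inner ℂ (Matrix.toEuclideanLin (E ⊗ₖ (1:Matrix (Fin 2 × Fin 2) (Fin 2 × Fin 2) ℂ)) (tq3 a b c))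
      (Matrix.toEuclideanLin (E ⊗ₖ (1:Matrix (Fin 2 × Fin 2) (Fin 2 × Fin 2) ℂ)) (tq3 a' b' c')) : ℂ)
    = ∑ p : Fin 2 × Fin 2 × Fin 2, star (Matrix.toEuclideanLin (E ⊗ₖ (1:Matrix (Fin 2 × Fin 2) (Fin 2 × Fin 2) ℂ)) (tq3 a b c) p) * (Matrix.toEuclideanLin (E ⊗ₖ (1:Matrix (Fin 2 × Fin 2) (Fin 2 × Fin 2) ℂ)) (tq3 a' b' c') p)
    from by simp [EuclideanSpace.inner_eq_star_dotProduct, dotProduct, mul_comm]]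
  simp only [shift_comp, Fintype.sum_prod_type, Fin.sum_univ_two, star_mul']
  ring

theorem shift_OPM_nontrivial_effect (E : Matrix (Fin 2) (Fin 2) ℂ) (hE : E.PosSemidef)
    (hne : ¬∃ c : ℂ, E = c • (1 : Matrix (Fin 2) (Fin 2) ℂ)) :
    ∃ i j : Fin 8, i ≠ j ∧
      (inner ℂ
        (Matrix.toEuclideanLin (E ⊗ₖ (1 : Matrix (Fin 2 × Fin 2) (Fin 2 × Fin 2) ℂ))
          (shiftBasis i))
        (Matrix.toEuclideanLin (E ⊗ₖ (1 : Matrix (Fin 2 × Fin 2) (Fin 2 × Fin 2) ℂ))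
          (shiftBasis j)) : ℂ) ≠ 0 := by
  by_contra hcon
  push_neg at hcon
  have hA : (∑ i, star (E.mulVec (e2 0) i) * E.mulVec (e2 1) i) * (∑ k, star (e2 1 k) * e2 1 k)
      * (∑ l, star (plus l) * e2 1 l) = 0 :=
    (shift_key E (e2 0) (e2 1) plus (e2 1) (e2 1) (e2 1)).symm.trans (hcon 0 7 (by decide))
  have hB : (∑ i, star (E.mulVec (e2 1) i) * E.mulVec (e2 0) i) * (∑ k, star (plus k) * e2 0 k)
      * (∑ l, star (e2 0 l) * e2 0 l) = 0 :=
    (shift_key E (e2 1) plus (e2 0) (e2 0) (e2 0) (e2 0)).symm.trans (hcon 2 6 (by decide))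
  have hC : (∑ i, star (E.mulVec plus i) * E.mulVec minus i) * (∑ k, star (e2 0 k) * e2 0 k)
      * (∑ l, star (e2 1 l) * e2 1 l) = 0 :=
    (shift_key E plus (e2 0) (e2 1) minus (e2 0) (e2 1)).symm.trans (hcon 4 5 (by decide))
  simp only [e2, plus, minus, s2, EuclideanSpace.single_apply, PiLp.smul_apply, PiLp.add_apply,
    PiLp.sub_apply, Matrix.mulVec, dotProduct, Fin.sum_univ_two, smul_eq_mul] at hA hB hC
  norm_num at hA hB hC
  -- hermiticity facts
  have herm := hE.1
  have h10 : E 1 0 = star (E 0 1) := (Matrix.IsHermitian.apply herm 1 0).symm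
  have h00 : star (E 0 0) = E 0 0 := Matrix.IsHermitian.apply herm 0 0
  have h11 : star (E 1 1) = E 1 1 := Matrix.IsHermitian.apply herm 1 1
  have hs2 : ((Real.sqrt 2 : ℝ) : ℂ) ≠ 0 := by norm_cast; positivity
  have hs2sq : ((Real.sqrt 2 : ℝ) : ℂ) * ((Real.sqrt 2 : ℝ) : ℂ) = 2 := by
    norm_cast
    exact Real.mul_self_sqrt (by norm_num)
  field_simp at hC
  -- diagonal nonneg
  have hdiag : ∀ i : Fin 2, 0 ≤ E i i := fun i => by
    exact hE.diag_nonneg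
  have ha := hdiag 0
  have hd := hdiag 1
  obtain ⟨haim, hare⟩ : (E 0 0).im = 0 ∧ 0 ≤ (E 0 0).re := by
    rw [Complex.le_def] at ha; exact ⟨ha.2.symm, by simpa using ha.1⟩
  obtain ⟨hdim, hdre⟩ : (E 1 1).im = 0 ∧ 0 ≤ (E 1 1).re := by
    rw [Complex.le_def] at hd; exact ⟨hd.2.symm, by simpa using hd.1⟩
  set a := E 0 0 with ha'
  set d := E 1 1 with hd'
  set b := E 0 1 with hb'
  have eqA : b * (a + d) = 0 := by
    rw [h10] at hA
    calc b * (a + d) = star a * b + star (star b) * d := by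
          rw [h00, star_star]; ring
      _ = 0 := hA
  have eqA' : star b * (a + d) = 0 := by
    have h := congrArg star eqA
    rw [star_mul', star_add, h00, h11, star_zero] at h
    linear_combination h
  have haa : a * a = d * d := by
    rw [h10] at hC
    simp only [starRingEnd_apply, star_star] at hC
    rw [h00, h11] at hC
    linear_combination hC + eqA - eqA' 
  have had : a = d := by
    have hare2 : a = ((a.re : ℝ) : ℂ) := Complex.ext rfl (by simpa using haim)
    have hdre2 : d = ((d.re : ℝ) : ℂ) := Complex.ext rfl (by simpa using hdim)
    rw [hare2, hdre2] at haa
    have h1 : (a.re) * (a.re) = (d.re) * (d.re) := by exact_mod_cast haa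
    have h2 : a.re = d.re := by nlinarith
    rw [hare2, hdre2, h2]
  by_cases hb : b = 0
  · apply hne
    refine ⟨a, ?_⟩
    ext i j
    fin_cases i <;> fin_cases j <;>
      simp [Matrix.one_apply, ← ha', ← hd', ← hb', had, h10, hb]
  · have hsum : a + d = 0 := by
      rcases mul_eq_zero.1 eqA with h | h
      · exact absurd h hb
      · exact h
    have ha0 : a = 0 := by
      have h1 : a.re + d.re = 0 := by
        have := congrArg Complex.re hsum; simpa using this
      have h2 : a.re = d.re := by
        have := congrArg Complex.re had; simpa using this
      have hre0 : a.re = 0 := by linarith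
      exact Complex.ext hre0 haim
    have hd0 : d = 0 := by rw [← had]; exact ha0
    set r := ‖b‖ with hr
    have hrpos : 0 < r := by simpa [hr] using (norm_pos_iff.mpr hb)
    have hbb : star b * b = ((r^2 : ℝ) : ℂ) := by
      rw [hr, Complex.star_def, mul_comm, Complex.mul_conj, Complex.normSq_eq_norm_sq]
    have hpsd := hE.dotProduct_mulVec_nonneg ![b, -(r : ℂ)]
    have hval : dotProduct (star ![b, -(r:ℂ)]) (E.mulVec ![b, -(r:ℂ)])
        = ((-2 * r^3 : ℝ) : ℂ) := by
      simp only [dotProduct, Matrix.mulVec, Fin.sum_univ_two, Pi.star_apply,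
        Matrix.cons_val_zero, Matrix.cons_val_one, Matrix.head_cons]
      rw [h10, ← ha', ← hd', ← hb', ha0, hd0]
      simp only [star_neg, Complex.star_def, Complex.conj_ofReal] at hbb ⊢
      push_cast at hbb ⊢
      linear_combination (-2 * (r:ℂ)) * hbb
    rw [hval] at hpsd
    have hfin : (0:ℝ) ≤ -2 * r^3 := Complex.zero_le_real.mp hpsd
    nlinarith [pow_pos hrpos 3]
end
end
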